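/- If a serial episode α of N nodes has f_mi minimal windows, then its (N−1)-node suffix subepisode α_s = α[2]→...→α[N] has at least f_mi minimal windows. -/

import Mathlib

variable {A : Type}

/-- An occurrence of the (N+1)-node serial episode `α` in the event sequence
`E` (of length `n`): a strictly increasing index map matching the event-types. -/
def IsOcc (E : ℕ → A) (n : ℕ) {N : ℕ} (α : Fin (N+1) → A) (h : Fin (N+1) → ℕ) : Prop :=
  StrictMono h ∧ (∀ i, h i < n) ∧ (∀ i, E (h i) = α i)

/-- Earliest transiting occurrence: each `h i.succ` is the least index after
`h i.castSucc` carrying event-type `α i.succ`. -/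
def IsET (E : ℕ → A) (n : ℕ) {N : ℕ} (α : Fin (N+1) → A) (h : Fin (N+1) → ℕ) : Prop :=
  IsOcc E n α h ∧ ∀ (i : Fin N) (j : ℕ), h i.castSucc < j → E j = α i.succ → h i.succ ≤ j

/-- Lexicographic order on occurrences. -/
def OccLex {N : ℕ} (h1 h2 : Fin (N+1) → ℕ) : Prop :=
  ∃ i, (∀ k < i, h1 k = h2 k) ∧ h1 i < h2 i

/-- The window `[a, b]` contains an occurrence of `α`. -/
def WindowHasOcc (E : ℕ → A) (n : ℕ) {N : ℕ} (α : Fin (N+1) → A) (a b : ℕ) : Prop :=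
  ∃ h, IsOcc E n α h ∧ a ≤ h 0 ∧ h (Fin.last N) ≤ b

/-- `[a, b]` is a minimal window of `α`: it contains an occurrence and no
proper subwindow contains one. -/
def IsMinWindow (E : ℕ → A) (n : ℕ) {N : ℕ} (α : Fin (N+1) → A) (a b : ℕ) : Prop :=
  WindowHasOcc E n α a b ∧
    ∀ c d, a ≤ c → d ≤ b → (a < c ∨ d < b) → ¬ WindowHasOcc E n α c d

/-- A minimal occurrence: its window is a minimal window. -/
def IsMinOcc (E : ℕ → A) (n : ℕ) {N : ℕ} (α : Fin (N+1) → A) (h : Fin (N+1) → ℕ) : Prop :=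
  IsOcc E n α h ∧ IsMinWindow E n α (h 0) (h (Fin.last N))

/-- `h'` is the earliest transiting occurrence immediately following `h`
in the lexicographic enumeration of earliest transiting occurrences. -/
def NextET (E : ℕ → A) (n : ℕ) {N : ℕ} (α : Fin (N+1) → A) (h h' : Fin (N+1) → ℕ) : Prop :=
  IsET E n α h ∧ IsET E n α h' ∧ OccLex h h' ∧
    ¬ ∃ g, IsET E n α g ∧ OccLex h g ∧ OccLex g h'

/-- `h1 <⋆ h2` are non-interleaved: `h2 (v_j) ≥ h1 (v_{j+1})` for all `j < N`. -/
def NonInterleaved {N : ℕ} (h1 h2 : Fin (N+1) → ℕ) : Prop :=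
  ∀ i : Fin N, h1 i.succ ≤ h2 i.castSucc

/-- Non-overlapped occurrences: one ends strictly before the other begins. -/
def NonOverlapped {N : ℕ} (h1 h2 : Fin (N+1) → ℕ) : Prop :=
  h1 (Fin.last N) < h2 0 ∨ h2 (Fin.last N) < h1 0

lemma minWindow_endpoints {E : ℕ → A} {n : ℕ} {N : ℕ} {α : Fin (N+1) → A} {a b : ℕ}
    (hm : IsMinWindow E n α a b) :
    ∃ h, IsOcc E n α h ∧ h 0 = a ∧ h (Fin.last N) = b := by
  obtain ⟨⟨h, hocc, ha, hb⟩, hmin⟩ := hm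
  refine ⟨h, hocc, ?_, ?_⟩
  · by_contra hne
    exact hmin (h 0) b ha le_rfl (Or.inl (lt_of_le_of_ne ha (Ne.symm hne)))
      ⟨h, hocc, le_refl _, hb⟩
  · by_contra hne
    exact hmin a (h (Fin.last N)) le_rfl hb (Or.inr (lt_of_le_of_ne hb hne))
      ⟨h, hocc, ha, le_refl _⟩

lemma exists_minWindow_le {E : ℕ → A} {n : ℕ} {N : ℕ} {α : Fin (N+1) → A} :
    ∀ (k a b : ℕ), b - a ≤ k → WindowHasOcc E n α a b →
      ∃ c d, a ≤ c ∧ d ≤ b ∧ IsMinWindow E n α c d := by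
  intro k
  induction k with
  | zero =>
    intro a b hk hw
    refine ⟨a, b, le_rfl, le_rfl, hw, ?_⟩
    intro c d hc hd hlt ⟨g, gocc, hgc, hgd⟩
    have h1 : c ≤ d := hgc.trans ((gocc.1.monotone (Fin.zero_le _)).trans hgd)
    obtain ⟨h, hocc, ha, hb⟩ := hw
    have h2 : a ≤ b := ha.trans ((hocc.1.monotone (Fin.zero_le _)).trans hb)
    omega
  | succ k ih =>
    intro a b hk hw
    by_cases hmin : IsMinWindow E n α a b
    · exact ⟨a, b, le_rfl, le_rfl, hmin⟩
    · rw [IsMinWindow] at hmin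
      push_neg at hmin
      obtain ⟨c, d, hc, hd, hlt, hw'⟩ := hmin hw
      obtain ⟨g, gocc, hgc, hgd⟩ := hw'
      have h1 : c ≤ d := hgc.trans ((gocc.1.monotone (Fin.zero_le _)).trans hgd)
      obtain ⟨c', d', hc', hd', hm⟩ := ih c d (by omega) ⟨g, gocc, hgc, hgd⟩
      exact ⟨c', d', hc.trans hc', hd'.trans hd, hm⟩

lemma cons_occ {E : ℕ → A} {n : ℕ} {N : ℕ} {α : Fin (N+2) → A} {g : Fin (N+1) → ℕ} {a : ℕ}
    (hg : IsOcc E n (fun i : Fin (N+1) => α i.succ) g) (hag : a < g 0) (han : a < n)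
    (hEa : E a = α 0) : IsOcc E n α (Fin.cases a g) := by
  obtain ⟨gsm, gn, gE⟩ := hg
  refine ⟨?_, ?_, ?_⟩
  · rw [Fin.strictMono_iff_lt_succ]
    intro i
    induction i using Fin.cases with
    | zero => exact hag
    | succ j =>
      have : (Fin.succ j).castSucc = (Fin.castSucc j).succ := (Fin.succ_castSucc j).symm
      rw [this, Fin.cases_succ, Fin.cases_succ]
      exact gsm Fin.castSucc_lt_succ
  · intro i
    induction i using Fin.cases with
    | zero => simpa using han
    | succ j => simpa using gn j
  · intro i
    induction i using Fin.cases with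
    | zero => simpa using hEa
    | succ j => simpa using gE j

lemma key_lt {E : ℕ → A} {n : ℕ} {N : ℕ} {α : Fin (N+2) → A} {a1 b1 a2 b2 c d : ℕ}
    (h1 : IsMinWindow E n α a1 b1) (h2 : IsMinWindow E n α a2 b2)
    (hw : WindowHasOcc E n (fun i : Fin (N+1) => α i.succ) c d)
    (hc2 : a2 < c) (hd1 : d ≤ b1) (h12 : a1 < a2) : False := by
  obtain ⟨h2f, h2occ, h20, h2last⟩ := minWindow_endpoints h2
  obtain ⟨g, gocc, hgc, hgd⟩ := hw
  have hag : a2 < g 0 := lt_of_lt_of_le hc2 hgc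
  have han : a2 < n := h20 ▸ h2occ.2.1 0
  have hEa : E a2 = α 0 := by rw [← h20]; exact h2occ.2.2 0
  have hocc := cons_occ gocc hag han hEa
  refine h1.2 a2 d h12.le hd1 (Or.inl h12) ⟨Fin.cases a2 g, hocc, ?_, ?_⟩
  · simp
  · rw [← Fin.succ_last]; exact hgd

theorem stmt14 (E : ℕ → A) (n : ℕ) {N : ℕ} (α : Fin (N+2) → A) :
    {p : ℕ × ℕ | IsMinWindow E n α p.1 p.2}.ncard ≤
      {p : ℕ × ℕ |
        IsMinWindow E n (fun i : Fin (N+1) => α i.succ) p.1 p.2}.ncard := by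
  set S := {p : ℕ × ℕ | IsMinWindow E n α p.1 p.2} with hS
  set T := {p : ℕ × ℕ | IsMinWindow E n (fun i : Fin (N+1) => α i.succ) p.1 p.2} with hT
  have key : ∀ p : ℕ × ℕ, ∃ q : ℕ × ℕ, p ∈ S → q ∈ T ∧ p.1 < q.1 ∧ q.2 ≤ p.2 := by
    intro p
    by_cases hp : p ∈ S
    · obtain ⟨h, hocc, h0, hlast⟩ := minWindow_endpoints hp
      have gocc : IsOcc E n (fun i : Fin (N+1) => α i.succ) (fun i => h i.succ) :=
        ⟨hocc.1.comp (fun _ _ hij => Fin.succ_lt_succ_iff.mpr hij), fun i => hocc.2.1 _, fun i => hocc.2.2 _⟩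
      have hw : WindowHasOcc E n (fun i : Fin (N+1) => α i.succ) (h 1) p.2 := by
        refine ⟨fun i => h i.succ, gocc, by norm_num, ?_⟩
        show h (Fin.last N).succ ≤ p.2
        rw [Fin.succ_last]
        exact hlast.le
      obtain ⟨c, d, hc, hd, hm⟩ := exists_minWindow_le (p.2 - h 1) (h 1) p.2 le_rfl hw
      refine ⟨(c, d), fun _ => ⟨hm, ?_, hd⟩⟩
      calc p.1 = h 0 := h0.symm
        _ < h 1 := hocc.1 (by norm_num)
        _ ≤ c := hc
    · exact ⟨p, fun hp' => absurd hp' hp⟩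
  choose f hf using key
  have hTfin : T.Finite := by
    apply Set.Finite.subset ((Set.finite_Iio n).prod (Set.finite_Iio n))
    rintro ⟨a, b⟩ hq
    obtain ⟨g, gocc, g0, glast⟩ := minWindow_endpoints hq
    exact ⟨g0 ▸ gocc.2.1 0, glast ▸ gocc.2.1 _⟩
  apply Set.ncard_le_ncard_of_injOn f (fun p hp => (hf p hp).1) _ hTfin
  intro p1 hp1 p2 hp2 heq
  obtain ⟨hq1, hc1, hd1⟩ := hf p1 hp1
  obtain ⟨hq2, hc2, hd2⟩ := hf p2 hp2
  rw [← heq] at hc2 hd2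
  have hw : WindowHasOcc E n (fun i : Fin (N+1) => α i.succ) (f p1).1 (f p1).2 := hq1.1
  have ha : p1.1 = p2.1 := by
    rcases lt_trichotomy p1.1 p2.1 with h | h | h
    · exact absurd (key_lt hp1 hp2 hw hc2 hd1 h) not_false
    · exact h
    · exact absurd (key_lt hp2 hp1 hw hc1 hd2 h) not_false
  have hb : p1.2 = p2.2 := by
    rcases lt_trichotomy p1.2 p2.2 with h | h | h
    · exact absurd (hp2.2 p1.1 p1.2 ha.ge h.le (Or.inr h) hp1.1) not_false
    · exact h
    · exact absurd (hp1.2 p2.1 p2.2 ha.le h.le (Or.inr h) hp2.1) not_false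
  exact Prod.ext ha hb
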